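/- Let K[u] = c₀ ∂²u/∂x₁² + ∂/∂x₂((β₂u² + β₁u + β₀)∂u/∂x₂) + (3b₀β₂u² + λ₁u + λ₀)∂u/∂x₂ + (b₀λ₁ − 2b₀²β₁)u² + k₁u. Then for all real ν₁, ν₂ and a₀ > 0, the function u = e^{−b₀x₂}(ν₁ sin(√a₀ x₁) + ν₂ cos(√a₀ x₁)) satisfies K[u] = (−a₀c₀ + b₀²β₀ − b₀λ₀ + k₁) u. -/

import Mathlib

open Real

/-- every element of `e^{−b₀x₂}·span{sin(√a₀x₁), cos(√a₀x₁)}`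
(a₀ > 0) is an eigenfunction of the cubic operator K with eigenvalue
`−a₀c₀ + b₀²β₀ − b₀λ₀ + k₁`. -/
theorem stmt5 (a₀ b₀ c₀ b0 b1 b2 l0 l1 k₁ : ℝ) (ha₀ : 0 < a₀)
    (K : (ℝ → ℝ → ℝ) → ℝ → ℝ → ℝ)
    (hK : ∀ u : ℝ → ℝ → ℝ, ∀ x y : ℝ,
      K u x y =
        c₀ * deriv (fun x' => deriv (fun x'' => u x'' y) x') x +
        deriv (fun y' => (b2 * (u x y') ^ 2 + b1 * u x y' + b0) *
          deriv (fun y'' => u x y'') y') y +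
        (3 * b₀ * b2 * (u x y) ^ 2 + l1 * u x y + l0) *
          deriv (fun y' => u x y') y +
        (b₀ * l1 - 2 * b₀ ^ 2 * b1) * (u x y) ^ 2 + k₁ * u x y) :
    ∀ ν₁ ν₂ : ℝ, ∀ x y : ℝ,
      K (fun x₁ x₂ => exp (-b₀ * x₂) *
          (ν₁ * sin (Real.sqrt a₀ * x₁) + ν₂ * cos (Real.sqrt a₀ * x₁))) x y =
        (-a₀ * c₀ + b₀ ^ 2 * b0 - b₀ * l0 + k₁) *
          (exp (-b₀ * y) *
            (ν₁ * sin (Real.sqrt a₀ * x) + ν₂ * cos (Real.sqrt a₀ * x))) := by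
  intro ν₁ ν₂ x y
  rw [hK]
  set c := Real.sqrt a₀ with hc
  have hcc : c * c = a₀ := Real.mul_self_sqrt ha₀.le
  -- derivative of the exponential factor
  have hE : ∀ t : ℝ, HasDerivAt (fun s : ℝ => Real.exp (-b₀ * s))
      (Real.exp (-b₀ * t) * (-b₀)) t := fun t => by
    simpa using (((hasDerivAt_id t).const_mul (-b₀)).exp)
  -- derivative of the trigonometric factor
  have hS : ∀ t : ℝ, HasDerivAt (fun s : ℝ => ν₁ * Real.sin (c * s) + ν₂ * Real.cos (c * s))
      (ν₁ * (Real.cos (c * t) * c) + ν₂ * (-Real.sin (c * t) * c)) t := fun t => by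
    have h1 : HasDerivAt (fun s : ℝ => c * s) c t := by
      simpa using (hasDerivAt_id t).const_mul c
    exact (h1.sin.const_mul ν₁).add (h1.cos.const_mul ν₂)
  -- first x-derivative
  have hdx : (fun x' => deriv
      (fun x'' => Real.exp (-b₀ * y) * (ν₁ * Real.sin (c * x'') + ν₂ * Real.cos (c * x''))) x')
      = fun x' => Real.exp (-b₀ * y) *
          (ν₁ * (Real.cos (c * x') * c) + ν₂ * (-Real.sin (c * x') * c)) :=
    funext fun t => ((hS t).const_mul (Real.exp (-b₀ * y))).deriv
  -- second x-derivative
  have hdxx : deriv (fun x' => Real.exp (-b₀ * y) *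
      (ν₁ * (Real.cos (c * x') * c) + ν₂ * (-Real.sin (c * x') * c))) x
      = Real.exp (-b₀ * y) *
        (ν₁ * (-Real.sin (c * x) * c * c) + ν₂ * (-(Real.cos (c * x) * c) * c)) := by
    have h1 : HasDerivAt (fun s : ℝ => c * s) c x := by
      simpa using (hasDerivAt_id x).const_mul c
    exact (((((h1.cos.mul_const c).const_mul ν₁).add
      (((h1.sin.neg.mul_const c).const_mul ν₂)))).const_mul (Real.exp (-b₀ * y))).deriv
  -- y-derivative of u
  have hu : ∀ t : ℝ, HasDerivAt
      (fun s : ℝ => Real.exp (-b₀ * s) * (ν₁ * Real.sin (c * x) + ν₂ * Real.cos (c * x)))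
      (Real.exp (-b₀ * t) * (-b₀) * (ν₁ * Real.sin (c * x) + ν₂ * Real.cos (c * x))) t :=
    fun t => (hE t).mul_const _
  have hdy : ∀ t : ℝ, deriv
      (fun y'' => Real.exp (-b₀ * y'') * (ν₁ * Real.sin (c * x) + ν₂ * Real.cos (c * x))) t
      = Real.exp (-b₀ * t) * (-b₀) *
          (ν₁ * Real.sin (c * x) + ν₂ * Real.cos (c * x)) :=
    fun t => (hu t).deriv
  rw [hdx, hdxx]
  simp only [hdy]
  -- the middle (flux) term
  set Sx := ν₁ * Real.sin (c * x) + ν₂ * Real.cos (c * x) with hSx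
  have hmid : deriv (fun y' =>
      (b2 * (Real.exp (-b₀ * y') * Sx) ^ 2 + b1 * (Real.exp (-b₀ * y') * Sx) + b0) *
        (Real.exp (-b₀ * y') * (-b₀) * Sx)) y
      = (b2 * (2 * (Real.exp (-b₀ * y) * Sx) *
            (Real.exp (-b₀ * y) * (-b₀) * Sx)) +
          b1 * (Real.exp (-b₀ * y) * (-b₀) * Sx)) *
          (Real.exp (-b₀ * y) * (-b₀) * Sx) +
        (b2 * (Real.exp (-b₀ * y) * Sx) ^ 2 + b1 * (Real.exp (-b₀ * y) * Sx) + b0) *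
          (Real.exp (-b₀ * y) * (-b₀) * (-b₀) * Sx) := by
    have h1 : HasDerivAt (fun t : ℝ =>
        b2 * (Real.exp (-b₀ * t) * Sx) ^ 2 + b1 * (Real.exp (-b₀ * t) * Sx) + b0)
        (b2 * (2 * (Real.exp (-b₀ * y) * Sx) * (Real.exp (-b₀ * y) * (-b₀) * Sx)) +
          b1 * (Real.exp (-b₀ * y) * (-b₀) * Sx)) y := by
      have hsq : HasDerivAt (fun t : ℝ => (Real.exp (-b₀ * t) * Sx) ^ 2)
          (2 * (Real.exp (-b₀ * y) * Sx) * (Real.exp (-b₀ * y) * (-b₀) * Sx)) y := by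
        have h : HasDerivAt (fun t : ℝ => Real.exp (-b₀ * t) * Sx * (Real.exp (-b₀ * t) * Sx)) _ y :=
          (hu y).mul (hu y)
        have heq : (fun t : ℝ => Real.exp (-b₀ * t) * Sx * (Real.exp (-b₀ * t) * Sx))
            = fun t : ℝ => (Real.exp (-b₀ * t) * Sx) ^ 2 := by
          funext t; ring
        rw [heq] at h
        convert h using 1
        ring
      exact ((hsq.const_mul b2).add ((hu y).const_mul b1)).add_const b0
    have h2 : HasDerivAt (fun t : ℝ => Real.exp (-b₀ * t) * (-b₀) * Sx)
        (Real.exp (-b₀ * y) * (-b₀) * (-b₀) * Sx) y := by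
      simpa [mul_assoc, mul_comm, mul_left_comm] using ((hE y).mul_const (-b₀)).mul_const Sx
    simpa using (h1.fun_mul h2).deriv
  rw [hmid]
  rw [← hcc]
  ring
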